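/- For a non-negative integer m and a non-negative integer i, the limit as z tends to -m of (z + m)^(i+1) * ψ^(i)(z) equals (-1)^(i+1) * i!, where ψ^(i) is the i-th derivative of the digamma function. -/

import Mathlib

open Complex Filter Topology Set

private lemma iteratedDerivWithin_isOpen' {n : ℕ} {f : ℂ → ℂ} {s : Set ℂ} (hs : IsOpen s)
    {x : ℂ} (hx : x ∈ s) : iteratedDerivWithin n f s x = iteratedDeriv n f x := by
  simp only [iteratedDerivWithin, iteratedDeriv, iteratedFDerivWithin_of_isOpen n hs hx]

private lemma iteratedDeriv_sub_at {n : ℕ} {f g : ℂ → ℂ} {x : ℂ}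
    (hf : ContDiffAt ℂ n f x) (hg : ContDiffAt ℂ n g x) :
    iteratedDeriv n (fun z => f z - g z) x = iteratedDeriv n f x - iteratedDeriv n g x := by
  obtain ⟨u, hu, hfu⟩ := hf.contDiffOn le_rfl (by simp)
  obtain ⟨v, hv, hgv⟩ := hg.contDiffOn le_rfl (by simp)
  set s := interior (u ∩ v) with hs_def
  have hs : IsOpen s := isOpen_interior
  have hxs : x ∈ s := by
    rw [hs_def, mem_interior_iff_mem_nhds]
    exact inter_mem hu hv
  have h1 : ContDiffOn ℂ n f s := hfu.mono (interior_subset.trans inter_subset_left)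
  have h2 : ContDiffOn ℂ n g s := hgv.mono (interior_subset.trans inter_subset_right)
  have := iteratedDerivWithin_sub hxs hs.uniqueDiffOn (h1 x hxs) (h2 x hxs)
  rw [iteratedDerivWithin_isOpen' hs hxs, iteratedDerivWithin_isOpen' hs hxs,
    iteratedDerivWithin_isOpen' hs hxs] at this
  simpa [Pi.sub_def] using this

private lemma iteratedDeriv_add_at {n : ℕ} {f g : ℂ → ℂ} {x : ℂ}
    (hf : ContDiffAt ℂ n f x) (hg : ContDiffAt ℂ n g x) :
    iteratedDeriv n (fun z => f z + g z) x = iteratedDeriv n f x + iteratedDeriv n g x := by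
  obtain ⟨u, hu, hfu⟩ := hf.contDiffOn le_rfl (by simp)
  obtain ⟨v, hv, hgv⟩ := hg.contDiffOn le_rfl (by simp)
  set s := interior (u ∩ v) with hs_def
  have hs : IsOpen s := isOpen_interior
  have hxs : x ∈ s := by
    rw [hs_def, mem_interior_iff_mem_nhds]
    exact inter_mem hu hv
  have h1 : ContDiffOn ℂ n f s := hfu.mono (interior_subset.trans inter_subset_left)
  have h2 : ContDiffOn ℂ n g s := hgv.mono (interior_subset.trans inter_subset_right)
  have := iteratedDerivWithin_add hxs hs.uniqueDiffOn (h1 x hxs) (h2 x hxs)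
  rw [iteratedDerivWithin_isOpen' hs hxs, iteratedDerivWithin_isOpen' hs hxs,
    iteratedDerivWithin_isOpen' hs hxs] at this
  simpa [Pi.add_def] using this

private lemma iteratedDeriv_sum_at {n : ℕ} {x : ℂ} (s : Finset ℕ) (f : ℕ → ℂ → ℂ)
    (hf : ∀ k ∈ s, ContDiffAt ℂ n (f k) x) :
    iteratedDeriv n (fun z => ∑ k ∈ s, f k z) x = ∑ k ∈ s, iteratedDeriv n (f k) x := by
  induction s using Finset.induction with
  | empty =>
    have : iteratedDeriv n (fun _ : ℂ => (0:ℂ)) = fun _ => 0 := by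
      rw [iteratedDeriv_eq_iterate]
      exact Function.iterate_fixed (deriv_const' (0:ℂ)) n
    simp [this]
  | insert _ _ hnot ih =>
    rename_i a t
    rw [Finset.sum_insert hnot]
    have h1 : ContDiffAt ℂ n (f a) x := hf a (Finset.mem_insert_self a t)
    have h2 : ContDiffAt ℂ n (fun z => ∑ k ∈ t, f k z) x :=
      ContDiffAt.sum fun k hk => hf k (Finset.mem_insert_of_mem hk)
    have := iteratedDeriv_add_at h1 h2
    rw [show (fun z => f a z + ∑ k ∈ t, f k z) = fun z => ∑ k ∈ insert a t, f k z by
      funext z; rw [Finset.sum_insert hnot]] at this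
    rw [this, ih fun k hk => hf k (Finset.mem_insert_of_mem hk)]

private lemma deriv_Gamma_add_one {z : ℂ} (hz : ∀ n : ℕ, z ≠ -n) :
    deriv Complex.Gamma (z + 1) = Complex.Gamma z + z * deriv Complex.Gamma z := by
  have hz0 : z ≠ 0 := by simpa using hz 0
  have hd : DifferentiableAt ℂ Complex.Gamma z := Complex.differentiableAt_Gamma z hz
  have hev : (fun w : ℂ => Complex.Gamma (w + 1)) =ᶠ[𝓝 z] fun w => w * Complex.Gamma w := by
    filter_upwards [compl_singleton_mem_nhds hz0] with w hw
    exact Complex.Gamma_add_one w hw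
  calc deriv Complex.Gamma (z + 1) = deriv (fun w => Complex.Gamma (w + 1)) z :=
        (deriv_comp_add_const _ _ _).symm
    _ = deriv (fun w => w * Complex.Gamma w) z := hev.deriv_eq
    _ = Complex.Gamma z + z * deriv Complex.Gamma z := by
        rw [deriv_fun_mul (c := fun w : ℂ => w) differentiableAt_id hd]; simp

private lemma psi_step {z : ℂ} (hz : ∀ n : ℕ, z ≠ -n) :
    deriv Complex.Gamma z / Complex.Gamma z
      = deriv Complex.Gamma (z + 1) / Complex.Gamma (z + 1) - z⁻¹ := by
  have hz0 : z ≠ 0 := by simpa using hz 0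
  have hΓ : Complex.Gamma z ≠ 0 := Complex.Gamma_ne_zero hz
  rw [Complex.Gamma_add_one z hz0, deriv_Gamma_add_one hz]
  field_simp
  ring

private lemma psi_shift (M : ℕ) {z : ℂ} (hz : ∀ n : ℕ, z ≠ -n) :
    deriv Complex.Gamma z / Complex.Gamma z
      = deriv Complex.Gamma (z + M) / Complex.Gamma (z + M)
        - ∑ k ∈ Finset.range M, (z + k)⁻¹ := by
  induction M with
  | zero => simp
  | succ M ih =>
    have hzM : ∀ n : ℕ, z + M ≠ -n := by
      intro n h
      apply hz (n + M)
      push_cast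
      linear_combination h
    rw [ih, psi_step hzM, Finset.sum_range_succ]
    push_cast
    ring_nf

private lemma psi_analyticOnNhd :
    AnalyticOnNhd ℂ (fun w : ℂ => deriv Complex.Gamma w / Complex.Gamma w)
      {w : ℂ | 0 < w.re} := by
  have hW : IsOpen {w : ℂ | 0 < w.re} := isOpen_lt continuous_const Complex.continuous_re
  have hne : ∀ w ∈ {w : ℂ | 0 < w.re}, ∀ n : ℕ, w ≠ -n := by
    intro w hw n h
    rw [h] at hw
    simp only [mem_setOf_eq] at hw
    have : (-(n:ℂ)).re ≤ 0 := by simp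
    linarith
  have hdo : DifferentiableOn ℂ Complex.Gamma {w : ℂ | 0 < w.re} :=
    fun w hw => (Complex.differentiableAt_Gamma w (hne w hw)).differentiableWithinAt
  have hΓ : AnalyticOnNhd ℂ Complex.Gamma {w : ℂ | 0 < w.re} := hdo.analyticOnNhd hW
  exact hΓ.deriv.div hΓ fun w hw => Complex.Gamma_ne_zero (hne w hw)

private lemma psi_iter_analytic (i : ℕ) :
    AnalyticOnNhd ℂ (deriv^[i] (fun w : ℂ => deriv Complex.Gamma w / Complex.Gamma w))
      {w : ℂ | 0 < w.re} := by
  induction i with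
  | zero => exact psi_analyticOnNhd
  | succ n ih =>
    rw [Function.iterate_succ']
    exact ih.deriv

private lemma prod_neg_one_sub (i : ℕ) :
    ∏ j ∈ Finset.range i, (-1 - (j:ℂ)) = (-1) ^ i * (Nat.factorial i : ℂ) := by
  induction i with
  | zero => simp
  | succ i ih =>
    rw [Finset.prod_range_succ, ih, Nat.factorial_succ]
    push_cast
    ring

theorem polygamma_leading_coeff (m i : ℕ) :
    Filter.Tendsto
      (fun z : ℂ => (z + m) ^ (i + 1) *
        iteratedDeriv i (fun w : ℂ => deriv Complex.Gamma w / Complex.Gamma w) z)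
      (nhdsWithin (-(m : ℂ)) {(-(m : ℂ))}ᶜ)
      (nhds ((-1 : ℂ) ^ (i + 1) * (Nat.factorial i : ℂ))) := by
  set ψ : ℂ → ℂ := fun w : ℂ => deriv Complex.Gamma w / Complex.Gamma w with hψ_def
  set C : ℂ := ∏ j ∈ Finset.range i, (-1 - (j:ℂ)) with hC_def
  set U : Set ℂ := Metric.ball (-(m:ℂ)) (1/2) ∩ {(-(m:ℂ))}ᶜ with hU_def
  have hUopen : IsOpen U := Metric.isOpen_ball.inter isOpen_compl_singleton
  have hU_ne : ∀ z ∈ U, ∀ n : ℕ, z ≠ -n := by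
    rintro z ⟨hz1, hz2⟩ n h
    subst h
    by_cases hnm : n = m
    · exact hz2 (by rw [hnm]; exact Set.mem_singleton _)
    · have key : (1:ℝ) ≤ dist (-(n:ℂ)) (-(m:ℂ)) := by
        rw [Complex.dist_eq]
        have : (-(n:ℂ) - -(m:ℂ)) = (((m:ℤ) - n : ℤ) : ℂ) := by push_cast; ring
        rw [this, Complex.norm_intCast]
        have hmn : (m:ℤ) - n ≠ 0 := by
          intro h; apply hnm; omega
        have h1 := Int.one_le_abs hmn
        exact_mod_cast h1
      rw [Metric.mem_ball] at hz1
      linarith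
  -- basic facts about points of U
  have hUre : ∀ z ∈ U, 0 < (z + (m:ℂ) + 1).re := by
    rintro z ⟨hz1, _⟩
    rw [Metric.mem_ball, Complex.dist_eq] at hz1
    have habs : |(z + m).re| ≤ ‖z + m‖ := Complex.abs_re_le_norm _
    have : ‖z + m‖ < 1/2 := by
      have : z - -(m:ℂ) = z + m := by ring
      rwa [this] at hz1
    have h2 : (z + (m:ℂ)).re > -(1/2) := by
      have := abs_lt.mp (lt_of_le_of_lt habs this)
      linarith [this.1]
    have : (z + (m:ℂ) + 1).re = (z + (m:ℂ)).re + 1 := by simp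
    rw [this]; linarith
  -- continuity/smoothness of the shifted digamma
  have hψan : ∀ z ∈ U, AnalyticAt ℂ ψ (z + (m:ℂ) + 1) := fun z hz =>
    psi_analyticOnNhd _ (hUre z hz)
  have hh_cd : ∀ z ∈ U, ContDiffAt ℂ i (fun w => ψ (w + ((m:ℂ) + 1))) z := by
    intro z hz
    have h1 : ContDiffAt ℂ i ψ (z + ((m:ℂ) + 1)) := by
      have h := (hψan z hz).contDiffAt (n := i)
      rw [show z + (m:ℂ) + 1 = z + ((m:ℂ)+1) by ring] at h
      exact h
    exact h1.comp z (contDiffAt_id.add contDiffAt_const)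
  -- the key pointwise identity on U
  have key : ∀ z ∈ U,
      (z + m) ^ (i + 1) * iteratedDeriv i ψ z
        = (z + m) ^ (i + 1) * iteratedDeriv i (fun w => ψ (w + ((m:ℂ) + 1))) z
          - (∑ k ∈ Finset.range m, (z + m) ^ (i + 1) * (C * (z + k) ^ (-1 - (i:ℤ))))
          - C := by
    intro z hz
    have hzne := hU_ne z hz
    have hzk : ∀ k : ℕ, z + (k:ℂ) ≠ 0 := by
      intro k h
      exact hzne k (by linear_combination h)
    -- step 1 : replace ψ by shifted ψ minus sum on a neighborhood
    have e1 : iteratedDeriv i ψ z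
        = iteratedDeriv i (fun w => ψ (w + ((m:ℂ) + 1))
            - ∑ k ∈ Finset.range (m+1), (w + k)⁻¹) z := by
      apply Filter.EventuallyEq.iteratedDeriv_eq
      filter_upwards [hUopen.mem_nhds hz] with w hw
      have := psi_shift (m+1) (hU_ne w hw)
      rw [hψ_def]
      simp only []
      rw [this]
      push_cast
      ring_nf
    -- step 2 : split the difference
    have hS_cd : ContDiffAt ℂ i (fun w : ℂ => ∑ k ∈ Finset.range (m+1), (w + k)⁻¹) z :=
      ContDiffAt.sum fun k _ => (contDiffAt_id.add contDiffAt_const).inv (hzk k)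
    have e2 : iteratedDeriv i (fun w => ψ (w + ((m:ℂ) + 1))
            - ∑ k ∈ Finset.range (m+1), (w + k)⁻¹) z
        = iteratedDeriv i (fun w => ψ (w + ((m:ℂ) + 1))) z
          - iteratedDeriv i (fun w : ℂ => ∑ k ∈ Finset.range (m+1), (w + k)⁻¹) z :=
      iteratedDeriv_sub_at (hh_cd z hz) hS_cd
    -- step 3 : sum rule
    have e3 : iteratedDeriv i (fun w : ℂ => ∑ k ∈ Finset.range (m+1), (w + k)⁻¹) z
        = ∑ k ∈ Finset.range (m+1), iteratedDeriv i (fun w : ℂ => (w + k)⁻¹) z :=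
      iteratedDeriv_sum_at _ _
        fun k _ => (contDiffAt_id.add contDiffAt_const).inv (hzk k)
    -- step 4 : each summand
    have e4 : ∀ k : ℕ, iteratedDeriv i (fun w : ℂ => (w + k)⁻¹) z
        = C * (z + k) ^ (-1 - (i:ℤ)) := by
      intro k
      calc iteratedDeriv i (fun w : ℂ => (w + (k:ℂ))⁻¹) z
          = iteratedDeriv i Inv.inv (z + k) :=
            congrFun (iteratedDeriv_comp_add_const i Inv.inv (k:ℂ)) z
        _ = C * (z + k) ^ (-1 - (i:ℤ)) := by
            rw [iteratedDeriv_eq_iterate, iter_deriv_inv, hC_def, prod_neg_one_sub]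
    rw [e1, e2, e3]
    rw [Finset.sum_congr rfl fun k _ => e4 k, Finset.sum_range_succ]
    have hzm : z + (m:ℂ) ≠ 0 := hzk m
    have last : (z + m) ^ (i + 1) * (C * (z + m) ^ (-1 - (i:ℤ))) = C := by
      rw [show ((z:ℂ) + m) ^ (i + 1) = (z + m) ^ ((i:ℤ) + 1) by
        rw [← zpow_natCast]; norm_num]
      rw [mul_comm C _, ← mul_assoc, ← zpow_add₀ hzm,
        show (i:ℤ) + 1 + (-1 - (i:ℤ)) = 0 by ring]
      simp
    rw [mul_sub, mul_add, Finset.mul_sum, last]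
    ring
  -- now the limit
  have hmem : U ∈ nhdsWithin (-(m:ℂ)) {(-(m:ℂ))}ᶜ :=
    Filter.inter_mem (mem_nhdsWithin_of_mem_nhds (Metric.ball_mem_nhds _ (by norm_num)))
      self_mem_nhdsWithin
  have heq : (fun z : ℂ => (z + m) ^ (i + 1) * iteratedDeriv i ψ z)
      =ᶠ[nhdsWithin (-(m:ℂ)) {(-(m:ℂ))}ᶜ]
      fun z => (z + m) ^ (i + 1) * iteratedDeriv i (fun w => ψ (w + ((m:ℂ) + 1))) z
          - (∑ k ∈ Finset.range m, (z + m) ^ (i + 1) * (C * (z + k) ^ (-1 - (i:ℤ))))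
          - C := by
    filter_upwards [hmem] with z hz using key z hz
  rw [Filter.tendsto_congr' heq]
  -- limit of first part : 0
  have hT1 : Filter.Tendsto
      (fun z : ℂ => (z + m) ^ (i + 1) * iteratedDeriv i (fun w => ψ (w + ((m:ℂ) + 1))) z)
      (nhdsWithin (-(m:ℂ)) {(-(m:ℂ))}ᶜ) (nhds 0) := by
    have h1 : Filter.Tendsto (fun z : ℂ => (z + m) ^ (i + 1)) (nhds (-(m:ℂ))) (nhds 0) := by
      have : Continuous fun z : ℂ => (z + (m:ℂ)) ^ (i + 1) := (continuous_id.add continuous_const).pow _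
      have h := this.tendsto (-(m:ℂ))
      simpa using h
    -- continuity of the iterated derivative of shifted ψ at -m
    have hc : ContinuousAt (iteratedDeriv i ψ) (1 : ℂ) := by
      rw [hψ_def, iteratedDeriv_eq_iterate]
      exact (psi_iter_analytic i 1 (by norm_num)).continuousAt
    have h2 : Filter.Tendsto
        (fun z : ℂ => iteratedDeriv i (fun w => ψ (w + ((m:ℂ) + 1))) z)
        (nhds (-(m:ℂ))) (nhds (iteratedDeriv i ψ 1)) := by
      have hrw : (fun z : ℂ => iteratedDeriv i (fun w => ψ (w + ((m:ℂ) + 1))) z)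
          = fun z : ℂ => iteratedDeriv i ψ (z + ((m:ℂ) + 1)) := by
        funext t
        exact congrFun (iteratedDeriv_comp_add_const i ψ ((m:ℂ)+1)) t
      rw [hrw]
      have htr : Filter.Tendsto (fun z : ℂ => z + ((m:ℂ)+1)) (nhds (-(m:ℂ))) (nhds 1) := by
        have h : Filter.Tendsto (fun z : ℂ => z + ((m:ℂ)+1)) (nhds (-(m:ℂ)))
            (nhds (-(m:ℂ) + ((m:ℂ)+1))) := Filter.tendsto_id.add tendsto_const_nhds
        simpa using h
      exact hc.tendsto.comp htr
    have hmul : Filter.Tendsto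
        (fun z : ℂ => (z + m) ^ (i + 1) * iteratedDeriv i (fun w => ψ (w + ((m:ℂ) + 1))) z)
        (nhdsWithin (-(m:ℂ)) {(-(m:ℂ))}ᶜ) (nhds (0 * iteratedDeriv i ψ 1)) :=
      Filter.Tendsto.mul (h1.mono_left nhdsWithin_le_nhds) (h2.mono_left nhdsWithin_le_nhds)
    simpa using hmul
  -- limit of middle sum : 0
  have hT2 : Filter.Tendsto
      (fun z : ℂ => ∑ k ∈ Finset.range m, (z + m) ^ (i + 1) * (C * (z + k) ^ (-1 - (i:ℤ))))
      (nhdsWithin (-(m:ℂ)) {(-(m:ℂ))}ᶜ) (nhds 0) := by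
    have : Filter.Tendsto
        (fun z : ℂ => ∑ k ∈ Finset.range m, (z + m) ^ (i + 1) * (C * (z + k) ^ (-1 - (i:ℤ))))
        (nhds (-(m:ℂ))) (nhds 0) := by
      have h0 : (0:ℂ) = ∑ k ∈ Finset.range m, (0:ℂ) := by simp
      rw [h0]
      apply tendsto_finset_sum
      intro k hk
      have hkm : (k:ℕ) < m := Finset.mem_range.mp hk
      have hne : (-(m:ℂ)) + k ≠ 0 := by
        intro h
        have : (m:ℂ) = k := by linear_combination -h
        have : (m:ℕ) = k := by exact_mod_cast this
        omega
      have hc1 : Filter.Tendsto (fun z : ℂ => (z + m) ^ (i + 1)) (nhds (-(m:ℂ))) (nhds 0) := by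
        have : Continuous fun z : ℂ => (z + (m:ℂ)) ^ (i + 1) := (continuous_id.add continuous_const).pow _
        simpa using this.tendsto (-(m:ℂ))
      have hc2 : Filter.Tendsto (fun z : ℂ => C * (z + k) ^ (-1 - (i:ℤ)))
          (nhds (-(m:ℂ))) (nhds (C * ((-(m:ℂ)) + k) ^ (-1 - (i:ℤ)))) := by
        apply Filter.Tendsto.const_mul
        have haz : Filter.Tendsto (fun z : ℂ => z + (k:ℂ)) (nhds (-(m:ℂ)))
            (nhds ((-(m:ℂ)) + k)) := by
          exact (continuous_id.add continuous_const).tendsto _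
        exact ((continuousAt_zpow₀ _ _ (Or.inl hne)).tendsto).comp haz
      simpa using hc1.mul hc2
    exact this.mono_left nhdsWithin_le_nhds
  have hT3 : Filter.Tendsto (fun _ : ℂ => C) (nhdsWithin (-(m:ℂ)) {(-(m:ℂ))}ᶜ) (nhds C) :=
    tendsto_const_nhds
  have := (hT1.sub hT2).sub hT3
  have hval : (0:ℂ) - 0 - C = (-1:ℂ) ^ (i+1) * (Nat.factorial i : ℂ) := by
    rw [hC_def, prod_neg_one_sub]
    ring
  rwa [hval] at this
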